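/- There exists a universal constant C₀ > 0 with the following property. Let C > 0, m ∈ ℤ, and let f(t) = t^m·Σ_{j≥0} f_j t^j be a formal Laurent series over ℂ with f₀ ≠ 0 and |f_j| ≤ e^{C(j+1)} for all j ≥ 0. Let L(t) = Σ_{j≥1} c_j t^j be the unique formal power series with zero constant term satisfying exp(L(t)) = Σ_{j≥0} (f_j/f₀) t^j (the formal logarithm of the unit part of f, so that formally log(f(t)) = m·log t + log f₀ + Σ_{j≥1} c_j t^j). Then |c_j| ≤ |f₀|^{−j}·e^{(3C+C₀)j} for all j ≥ 1. -/

import Mathlib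

open PowerSeries Finset

lemma aux_coeff_pow_zero (cs : ℕ → ℂ) (h0 : cs 0 = 0) {k m : ℕ} (hk : k < m) :
    PowerSeries.coeff k ((PowerSeries.mk cs) ^ m) = 0 := by
  have hX : (PowerSeries.X : PowerSeries ℂ) ∣ PowerSeries.mk cs := by
    rw [PowerSeries.X_dvd_iff]; simpa using h0
  exact (PowerSeries.X_pow_dvd_iff.mp (pow_dvd_pow_of_dvd hX m)) k hk

lemma aux_log_rec (fc cs : ℕ → ℂ) (h0 : cs 0 = 0)
    (hrec : ∀ j : ℕ, (∑ n ∈ Finset.range (j + 1),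
        ((n.factorial : ℂ))⁻¹ * PowerSeries.coeff j ((PowerSeries.mk cs) ^ n)) = fc j / fc 0)
    (j : ℕ) :
    ((j : ℂ) + 1) * (fc (j + 1) / fc 0) =
      ∑ p ∈ Finset.range (j + 1),
        (fc p / fc 0) * (cs (j - p + 1) * (((j - p : ℕ) : ℂ) + 1)) := by
  classical
  set L := PowerSeries.mk cs with hL
  have step1 : ((j : ℂ) + 1) * (fc (j + 1) / fc 0)
      = ∑ n ∈ Finset.range (j + 1 + 1), ((n.factorial : ℂ))⁻¹ *
          PowerSeries.coeff j (PowerSeries.derivative ℂ (L ^ n)) := by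
    rw [← hrec (j + 1), Finset.mul_sum]
    refine Finset.sum_congr rfl fun n _ => ?_
    rw [PowerSeries.coeff_derivative]
    push_cast
    ring
  have step2 : ∀ n : ℕ, PowerSeries.derivative ℂ (L ^ n)
      = n • (L ^ (n - 1) * PowerSeries.derivative ℂ L) := fun n => by
    rw [Derivation.leibniz_pow]; rw [smul_eq_mul]
  rw [step1]
  rw [Finset.sum_range_succ']
  have hzero : ((Nat.factorial 0 : ℂ))⁻¹ *
      PowerSeries.coeff j (PowerSeries.derivative ℂ (L ^ 0)) = 0 := by
    simp [step2 0]
  rw [hzero, add_zero]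
  have step3 : ∀ m ∈ Finset.range (j + 1),
      ((Nat.factorial (m + 1) : ℂ))⁻¹ *
        PowerSeries.coeff j (PowerSeries.derivative ℂ (L ^ (m + 1)))
      = ((Nat.factorial m : ℂ))⁻¹ *
        PowerSeries.coeff j (L ^ m * PowerSeries.derivative ℂ L) := by
    intro m _
    rw [step2 (m + 1), Nat.add_sub_cancel, map_nsmul, nsmul_eq_mul]
    have h1 : ((m : ℂ) + 1) ≠ 0 := Nat.cast_add_one_ne_zero m
    have h2 : ((Nat.factorial m : ℂ)) ≠ 0 := Nat.cast_ne_zero.mpr m.factorial_ne_zero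
    rw [Nat.factorial_succ]
    push_cast
    field_simp
  rw [Finset.sum_congr rfl step3]
  have step4 : ∀ m : ℕ, PowerSeries.coeff j (L ^ m * PowerSeries.derivative ℂ L)
      = ∑ p ∈ Finset.HasAntidiagonal.antidiagonal j,
          PowerSeries.coeff p.1 (L ^ m) * (cs (p.2 + 1) * ((p.2 : ℂ) + 1)) := by
    intro m
    rw [PowerSeries.coeff_mul]
    refine Finset.sum_congr rfl fun p _ => ?_
    rw [PowerSeries.coeff_derivative, hL, PowerSeries.coeff_mk]
  simp only [step4, Finset.mul_sum]
  rw [Finset.sum_comm]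
  have step5 : ∀ p ∈ Finset.HasAntidiagonal.antidiagonal j,
      (∑ m ∈ Finset.range (j + 1),
        ((Nat.factorial m : ℂ))⁻¹ * (PowerSeries.coeff p.1 (L ^ m) * (cs (p.2 + 1) * ((p.2 : ℂ) + 1))))
      = (fc p.1 / fc 0) * (cs (p.2 + 1) * ((p.2 : ℂ) + 1)) := by
    intro p hp
    have hp1 : p.1 ≤ j := (by have := Finset.HasAntidiagonal.mem_antidiagonal.mp hp; omega)
    have : (∑ m ∈ Finset.range (j + 1),
        ((Nat.factorial m : ℂ))⁻¹ * PowerSeries.coeff p.1 (L ^ m)) = fc p.1 / fc 0 := by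
      rw [← hrec p.1]
      refine (Finset.sum_subset (Finset.range_subset_range.mpr (by omega)) ?_).symm
      intro m _ hm
      rw [Finset.mem_range, not_lt] at hm
      rw [aux_coeff_pow_zero cs h0 (by omega), mul_zero]
    calc (∑ m ∈ Finset.range (j + 1),
        ((Nat.factorial m : ℂ))⁻¹ * (PowerSeries.coeff p.1 (L ^ m) * (cs (p.2 + 1) * ((p.2 : ℂ) + 1))))
        = (∑ m ∈ Finset.range (j + 1),
        ((Nat.factorial m : ℂ))⁻¹ * PowerSeries.coeff p.1 (L ^ m)) * (cs (p.2 + 1) * ((p.2 : ℂ) + 1)) := by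
          rw [Finset.sum_mul]; exact Finset.sum_congr rfl fun m _ => by ring
      _ = (fc p.1 / fc 0) * (cs (p.2 + 1) * ((p.2 : ℂ) + 1)) := by rw [this]
  rw [Finset.sum_congr rfl step5]
  rw [Finset.Nat.sum_antidiagonal_eq_sum_range_succ_mk]

/-- **Lemma 7.3**: coefficient bounds for the formal logarithm of the unit part of a Laurent
series with exponentially bounded coefficients. `L = Σ_{j≥1} c_j t^j` is the unique formal
power series with zero constant term such that `exp(L) = Σ_{j≥0} (f_j/f₀) t^j`; its
coefficients satisfy `|c_j| ≤ |f₀|^{-j} e^{(3C+C₀)j}`. -/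
theorem laurent_log_coeff_bound :
    ∃ C₀ : ℝ, 0 < C₀ ∧
      ∀ C : ℝ, 0 < C → ∀ m : ℤ, ∀ fc : ℕ → ℂ,
        fc 0 ≠ 0 →
        (∀ j : ℕ, ‖fc j‖ ≤ Real.exp (C * (j + 1))) →
        ∀ cs : ℕ → ℂ, cs 0 = 0 →
        (∀ j : ℕ,
          (∑ n ∈ Finset.range (j + 1),
            ((n.factorial : ℂ))⁻¹ * PowerSeries.coeff j ((PowerSeries.mk cs) ^ n)) =
          fc j / fc 0) →
        ∀ j : ℕ, 1 ≤ j → ‖cs j‖ ≤ (‖fc 0‖ ^ j)⁻¹ * Real.exp ((3 * C + C₀) * j) := by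
  refine ⟨2, by norm_num, ?_⟩
  intro C hC m fc hf0 hfb cs hcs0 hrec
  set F : ℝ := ‖fc 0‖ with hF
  have hFpos : 0 < F := norm_pos_iff.mpr hf0
  have hFle : F ≤ Real.exp C := by
    have := hfb 0
    simpa using this
  set M : ℝ := Real.exp (3 * C) / F with hM
  have hMpos : 0 < M := div_pos (Real.exp_pos _) hFpos
  set β : ℝ := 4 * M with hβ
  have hβpos : 0 < β := by positivity
  clear_value F M β
  have hMβ : M ≤ β / 4 := by rw [hβ]; linarith
  -- bound on the normalized coefficients
  have hE : ∀ i : ℕ, ‖fc (i + 1) / fc 0‖ ≤ M ^ (i + 1) := by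
    intro i
    rw [norm_div, ← hF, hM, div_pow, div_le_div_iff₀ hFpos (pow_pos hFpos _)]
    have h1 : ‖fc (i + 1)‖ ≤ Real.exp (C * ((i : ℝ) + 2)) := by
      have h := hfb (i + 1)
      have h2 : (((i + 1 : ℕ)) : ℝ) + 1 = (i : ℝ) + 2 := by push_cast; ring
      rwa [h2] at h
    have h2 : F ^ i ≤ Real.exp (C * i) := by
      refine (pow_le_pow_left₀ hFpos.le hFle i).trans_eq ?_
      rw [← Real.exp_nat_mul]; ring_nf
    have h3 : Real.exp (3 * C) ^ (i + 1) = Real.exp (3 * C * ((i : ℝ) + 1)) := by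
      rw [← Real.exp_nat_mul]; push_cast; ring_nf
    calc ‖fc (i + 1)‖ * F ^ (i + 1)
        = ‖fc (i + 1)‖ * F ^ i * F := by ring
      _ ≤ Real.exp (C * ((i : ℝ) + 2)) * Real.exp (C * i) * F := by
          apply mul_le_mul_of_nonneg_right ?_ hFpos.le
          exact mul_le_mul h1 h2 (by positivity) (by positivity)
      _ = Real.exp (C * ((i : ℝ) + 2) + C * i) * F := by rw [Real.exp_add]
      _ ≤ Real.exp (3 * C * ((i : ℝ) + 1)) * F := by
          apply mul_le_mul_of_nonneg_right
            (Real.exp_le_exp.mpr (by nlinarith [Nat.cast_nonneg (α := ℝ) i])) hFpos.le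
      _ = Real.exp (3 * C) ^ (i + 1) * F := by rw [h3]
  -- the key recursion bound
  have key : ∀ j : ℕ, 1 ≤ j → ‖cs j‖ ≤ β ^ j := by
    intro j
    induction j using Nat.strong_induction_on with
    | _ j ih =>
      intro hj
      obtain ⟨jj, rfl⟩ : ∃ jj, j = jj + 1 := ⟨j - 1, by omega⟩
      have ident := aux_log_rec fc cs hcs0 hrec jj
      rw [Finset.sum_range_succ'] at ident
      have hterm0 : (fc 0 / fc 0) * (cs (jj - 0 + 1) * (((jj - 0 : ℕ) : ℂ) + 1))
          = ((jj : ℂ) + 1) * cs (jj + 1) := by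
        rw [div_self hf0, one_mul, Nat.sub_zero]; ring
      rw [hterm0] at ident
      have hsolve : ((jj : ℂ) + 1) * cs (jj + 1)
          = ((jj : ℂ) + 1) * (fc (jj + 1) / fc 0)
            - ∑ p ∈ Finset.range jj,
                (fc (p + 1) / fc 0) * (cs (jj - (p + 1) + 1) * (((jj - (p + 1) : ℕ) : ℂ) + 1)) := by
        rw [ident]; ring
      -- norm bound on each sum term
      have htermb : ∀ p ∈ Finset.range jj,
          ‖(fc (p + 1) / fc 0) * (cs (jj - (p + 1) + 1) * (((jj - (p + 1) : ℕ) : ℂ) + 1))‖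
            ≤ ((jj : ℝ) + 1) * (β ^ (jj + 1) * (1 / 4 : ℝ) ^ (p + 1)) := by
        intro p hp
        rw [Finset.mem_range] at hp
        have hidx : jj - (p + 1) + 1 = jj - p := by omega
        rw [hidx, norm_mul, norm_mul]
        have h1 : ‖fc (p + 1) / fc 0‖ ≤ M ^ (p + 1) := hE p
        have h2 : ‖cs (jj - p)‖ ≤ β ^ (jj - p) := ih (jj - p) (by omega) (by omega)
        have h3 : ‖(((jj - (p + 1) : ℕ) : ℂ) + 1)‖ ≤ (jj : ℝ) + 1 := by
          rw [show (((jj - (p + 1) : ℕ) : ℂ) + 1) = (((jj - (p + 1) + 1 : ℕ) : ℂ)) by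
            push_cast; ring]
          rw [Complex.norm_natCast]
          have : ((jj - (p + 1) + 1 : ℕ) : ℝ) ≤ ((jj + 1 : ℕ) : ℝ) := by
            exact_mod_cast Nat.cast_le.mpr (by omega : jj - (p + 1) + 1 ≤ jj + 1)
          push_cast at this ⊢; linarith
        have hMp : M ^ (p + 1) ≤ (β / 4) ^ (p + 1) := pow_le_pow_left₀ hMpos.le hMβ _
        calc ‖fc (p + 1) / fc 0‖ * (‖cs (jj - p)‖ * ‖(((jj - (p + 1) : ℕ) : ℂ) + 1)‖)
            ≤ (β / 4) ^ (p + 1) * (β ^ (jj - p) * ((jj : ℝ) + 1)) := by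
              apply mul_le_mul (h1.trans hMp) ?_ (by positivity) (by positivity)
              exact mul_le_mul h2 h3 (norm_nonneg _) (by positivity)
          _ = (β ^ (p + 1) * β ^ (jj - p)) * ((1 / 4 : ℝ) ^ (p + 1) * ((jj : ℝ) + 1)) := by
              rw [show β / 4 = β * (1 / 4) from by ring, mul_pow]; ring
          _ = ((jj : ℝ) + 1) * (β ^ (jj + 1) * (1 / 4 : ℝ) ^ (p + 1)) := by
              rw [← pow_add, show p + 1 + (jj - p) = jj + 1 from by omega]; ring
      have hsum : ‖∑ p ∈ Finset.range jj,
          (fc (p + 1) / fc 0) * (cs (jj - (p + 1) + 1) * (((jj - (p + 1) : ℕ) : ℂ) + 1))‖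
            ≤ ((jj : ℝ) + 1) * (β ^ (jj + 1) / 3) := by
        refine (norm_sum_le _ _).trans ?_
        refine (Finset.sum_le_sum htermb).trans ?_
        rw [← Finset.mul_sum, ← Finset.mul_sum]
        apply mul_le_mul_of_nonneg_left ?_ (by positivity)
        have heq : ∑ p ∈ Finset.range jj, ((1 : ℝ) / 4) ^ (p + 1)
            = (1 / 4 : ℝ) * ∑ p ∈ Finset.range jj, ((1 : ℝ) / 4) ^ p := by
          rw [Finset.mul_sum]; exact Finset.sum_congr rfl fun p _ => by ring
        have hgeo : ∑ p ∈ Finset.range jj, ((1 : ℝ) / 4) ^ p ≤ 4 / 3 := by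
          rw [geom_sum_eq (by norm_num : (1 / 4 : ℝ) ≠ 1) jj]
          have h0 : (0 : ℝ) ≤ (1 / 4 : ℝ) ^ jj := by positivity
          rw [show ((1 / 4 : ℝ) ^ jj - 1) / ((1 / 4 : ℝ) - 1)
              = (1 - (1 / 4 : ℝ) ^ jj) / (3 / 4) from by ring]
          rw [div_le_iff₀ (by norm_num : (0 : ℝ) < 3 / 4)]
          linarith
        have hs : ∑ p ∈ Finset.range jj, ((1 : ℝ) / 4) ^ (p + 1) ≤ 1 / 3 := by
          rw [heq]; linarith
        calc β ^ (jj + 1) * ∑ p ∈ Finset.range jj, ((1 : ℝ) / 4) ^ (p + 1)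
            ≤ β ^ (jj + 1) * (1 / 3) := mul_le_mul_of_nonneg_left hs (by positivity)
          _ = β ^ (jj + 1) / 3 := by ring
      have hEn : ‖((jj : ℂ) + 1) * (fc (jj + 1) / fc 0)‖
          ≤ ((jj : ℝ) + 1) * (β ^ (jj + 1) / 4) := by
        rw [norm_mul, show ((jj : ℂ) + 1) = ((jj + 1 : ℕ) : ℂ) by push_cast; ring,
          Complex.norm_natCast]
        refine mul_le_mul ?_ ?_ (norm_nonneg _) (by positivity)
        · push_cast; exact le_rfl
        · refine ((hE jj).trans (pow_le_pow_left₀ hMpos.le hMβ _)).trans ?_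
          rw [div_pow]
          gcongr
          exact le_self_pow₀ (by norm_num) (by omega)
      have hlhs : ‖((jj : ℂ) + 1) * cs (jj + 1)‖ = ((jj : ℝ) + 1) * ‖cs (jj + 1)‖ := by
        rw [norm_mul, show ((jj : ℂ) + 1) = ((jj + 1 : ℕ) : ℂ) by push_cast; ring,
          Complex.norm_natCast]
        push_cast; ring
      have hnorm : ((jj : ℝ) + 1) * ‖cs (jj + 1)‖ ≤ ((jj : ℝ) + 1) * β ^ (jj + 1) := by
        calc ((jj : ℝ) + 1) * ‖cs (jj + 1)‖ = ‖((jj : ℂ) + 1) * cs (jj + 1)‖ := hlhs.symm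
          _ = ‖((jj : ℂ) + 1) * (fc (jj + 1) / fc 0)
              - ∑ p ∈ Finset.range jj,
                (fc (p + 1) / fc 0) * (cs (jj - (p + 1) + 1) * (((jj - (p + 1) : ℕ) : ℂ) + 1))‖ := by
              rw [hsolve]
          _ ≤ _ := norm_sub_le _ _
          _ ≤ ((jj : ℝ) + 1) * (β ^ (jj + 1) / 4) + ((jj : ℝ) + 1) * (β ^ (jj + 1) / 3) :=
              add_le_add hEn hsum
          _ ≤ ((jj : ℝ) + 1) * β ^ (jj + 1) := by
              nlinarith [pow_pos hβpos (jj + 1), Nat.cast_nonneg (α := ℝ) jj]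
      exact le_of_mul_le_mul_left hnorm (by positivity)
  intro j hj
  refine (key j hj).trans ?_
  have hβeq : β ^ j = (4 * Real.exp (3 * C)) ^ j * (F ^ j)⁻¹ := by
    rw [hβ, hM, ← inv_pow, ← mul_pow]
    congr 1
    field_simp
  rw [hβeq, mul_comm]
  apply mul_le_mul_of_nonneg_left ?_ (by positivity)
  have h41 : (4 : ℝ) ≤ Real.exp 2 := by
    have h := Real.exp_one_gt_d9
    have h2 : Real.exp 2 = Real.exp 1 * Real.exp 1 := by rw [← Real.exp_add]; norm_num
    nlinarith
  have h42 : 4 * Real.exp (3 * C) ≤ Real.exp (3 * C + 2) := by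
    rw [Real.exp_add]
    nlinarith [Real.exp_pos (3 * C)]
  refine (pow_le_pow_left₀ (by positivity) h42 j).trans_eq ?_
  rw [← Real.exp_nat_mul]
  congr 1
  ring
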